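/- Let b > 0, let f : ℝ → ℝ be bounded and Lipschitz continuous with constant L ≥ 0, and let F : ℝ → ℝ satisfy F(y) − F(x) = ∫_x^y f(s) ds for all x ≤ y. Then ‖B_b F − f‖_∞ ≤ 3·L·b, where ‖·‖_∞ denotes the supremum norm over ℝ. -/

import Mathlib

open Filter MeasureTheory ProbabilityTheory

/-- The binning (histogram) operator: `A_b F (x) = (F((k+1)b) - F(kb))/b` for
`x ∈ [kb, (k+1)b)`, where `k = ⌊x/b⌋`. -/
noncomputable def abin (b : ℝ) (F : ℝ → ℝ) (x : ℝ) : ℝ :=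
  (F (((⌊x / b⌋ : ℝ) + 1) * b) - F ((⌊x / b⌋ : ℝ) * b)) / b

/-- The interpolation weight `u_b(x) = x/b - (⌊x/b - 1/2⌋ + ⌊x/b + 1/2⌋)/2`. -/
noncomputable def ub (b x : ℝ) : ℝ :=
  x / b - ((⌊x / b - 1 / 2⌋ : ℝ) + (⌊x / b + 1 / 2⌋ : ℝ)) / 2

/-- The frequency polygon operator
`B_b F (x) = (1 - u_b(x)) A_b F (x - b/2) + u_b(x) A_b F (x + b/2)`. -/
noncomputable def bfp (b : ℝ) (F : ℝ → ℝ) (x : ℝ) : ℝ :=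
  (1 - ub b x) * abin b F (x - b / 2) + ub b x * abin b F (x + b / 2)

lemma abin_sub_f (b : ℝ) (hb : 0 < b) (L : ℝ) (hL : 0 ≤ L) (f F : ℝ → ℝ)
    (hf : ∀ x y : ℝ, |f x - f y| ≤ L * |x - y|)
    (hF : ∀ x y : ℝ, x ≤ y → F y - F x = ∫ s in x..y, f s) (x y : ℝ) :
    |abin b F y - f x| ≤ L * (|y - x| + b) := by
  set k : ℝ := (⌊y / b⌋ : ℝ) with hk
  have hky : k * b ≤ y := by
    have := Int.floor_le (y / b)
    calc k * b ≤ (y / b) * b := by nlinarith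
    _ = y := by field_simp
  have hyk : y < (k + 1) * b := by
    have := Int.lt_floor_add_one (y / b)
    calc y = (y / b) * b := by field_simp
    _ < (k + 1) * b := by nlinarith
  have hle : k * b ≤ (k + 1) * b := by nlinarith
  have hcont : Continuous f := by
    have : LipschitzWith ⟨L, hL⟩ f := by
      apply LipschitzWith.of_dist_le_mul
      intro a c
      rw [Real.dist_eq, Real.dist_eq]; exact hf a c
    exact this.continuous
  have hi1 : IntervalIntegrable f volume (k * b) ((k + 1) * b) :=
    hcont.intervalIntegrable _ _
  have hi2 : IntervalIntegrable (fun _ : ℝ => f x) volume (k * b) ((k + 1) * b) :=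
    intervalIntegrable_const
  have hsub : ∫ s in (k*b)..((k+1)*b), (f s - f x) = (F ((k+1)*b) - F (k*b)) - b * f x := by
    rw [intervalIntegral.integral_sub hi1 hi2, ← hF _ _ hle,
      intervalIntegral.integral_const]
    have : (k + 1) * b - k * b = b := by ring
    rw [this]
    simp [smul_eq_mul]
  have hbound : |∫ s in (k*b)..((k+1)*b), (f s - f x)| ≤ L * (|y - x| + b) * b := by
    have h := intervalIntegral.norm_integral_le_of_norm_le_const
      (C := L * (|y - x| + b)) (a := k*b) (b := (k+1)*b)
      (f := fun s => f s - f x) ?_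
    · have he : |(k+1)*b - k*b| = b := by
        rw [abs_of_nonneg (by nlinarith)]; ring
      rw [Real.norm_eq_abs, he] at h
      exact h
    · intro s hs
      rw [Set.uIoc_of_le hle] at hs
      have h1 : |f s - f x| ≤ L * |s - x| := hf s x
      have h2 : |s - x| ≤ |s - y| + |y - x| := abs_sub_le s y x
      have h3 : |s - y| ≤ b := by
        rw [abs_le]; constructor <;> [nlinarith [hs.1, hs.2]; nlinarith [hs.1, hs.2]]
      have : |f s - f x| ≤ L * (|s - y| + |y - x|) := by nlinarith [abs_nonneg (f s - f x)]
      simp only [Real.norm_eq_abs]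
      calc |f s - f x| ≤ L * (|s - y| + |y - x|) := this
      _ ≤ L * (|y - x| + b) := by nlinarith
  have habin : abin b F y - f x = (∫ s in (k*b)..((k+1)*b), (f s - f x)) / b := by
    rw [hsub]
    unfold abin
    rw [← hk]
    field_simp
  rw [habin, abs_div, abs_of_pos hb, div_le_iff₀ hb]
  exact hbound

lemma ub_mem (b x : ℝ) : ub b x ∈ Set.Ico (0 : ℝ) 1 := by
  have hfl : (⌊x / b + 1 / 2⌋ : ℤ) = ⌊x / b - 1 / 2⌋ + 1 := by
    rw [show x / b + 1 / 2 = x / b - 1 / 2 + 1 by ring, Int.floor_add_one]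
  have : ub b x = Int.fract (x / b - 1 / 2) := by
    unfold ub
    rw [hfl, Int.fract]
    push_cast
    ring
  rw [this]
  exact ⟨Int.fract_nonneg _, Int.fract_lt_one _⟩

/-- If `f` is bounded and `L`-Lipschitz and `F` is an antiderivative of `f`, then
`‖B_b F - f‖_∞ ≤ 3 L b`. -/
theorem bfp_approx (b : ℝ) (hb : 0 < b) (L : ℝ) (hL : 0 ≤ L) (f F : ℝ → ℝ)
    (hfb : ∃ M : ℝ, ∀ x : ℝ, |f x| ≤ M)
    (hf : ∀ x y : ℝ, |f x - f y| ≤ L * |x - y|)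
    (hF : ∀ x y : ℝ, x ≤ y → F y - F x = ∫ s in x..y, f s) :
    ∀ x : ℝ, |bfp b F x - f x| ≤ 3 * L * b := by
  intro x
  obtain ⟨hu0, hu1⟩ := ub_mem b x
  have h1 := abin_sub_f b hb L hL f F hf hF x (x - b / 2)
  have h2 := abin_sub_f b hb L hL f F hf hF x (x + b / 2)
  have e1 : |x - b / 2 - x| = b / 2 := by rw [abs_of_nonpos (by linarith)]; ring
  have e2 : |x + b / 2 - x| = b / 2 := by rw [abs_of_nonneg (by linarith)]; ring
  rw [e1] at h1; rw [e2] at h2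
  have key : bfp b F x - f x =
      (1 - ub b x) * (abin b F (x - b / 2) - f x) + ub b x * (abin b F (x + b / 2) - f x) := by
    unfold bfp; ring
  rw [key]
  calc |(1 - ub b x) * (abin b F (x - b / 2) - f x) + ub b x * (abin b F (x + b / 2) - f x)|
      ≤ |(1 - ub b x) * (abin b F (x - b / 2) - f x)| + |ub b x * (abin b F (x + b / 2) - f x)| :=
        abs_add_le _ _
    _ = (1 - ub b x) * |abin b F (x - b / 2) - f x| + ub b x * |abin b F (x + b / 2) - f x| := by
        rw [abs_mul, abs_mul, abs_of_nonneg (by linarith), abs_of_nonneg hu0]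
    _ ≤ (1 - ub b x) * (L * (b / 2 + b)) + ub b x * (L * (b / 2 + b)) := by
        have := abs_nonneg (abin b F (x - b / 2) - f x)
        nlinarith
    _ = L * (b / 2 + b) := by ring
    _ ≤ 3 * L * b := by nlinarith
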